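/- For every integer n ≥ 2, the (n+1)-dimensional n-ary Filippov algebra C₃ does not degenerate to B; that is, the structure of B does not lie in the closure of the GL(V)-orbit of the structure of C₃. -/

import Mathlib

open Function Submodule

/-! Common framework: `V = ℂ^{n+1}`, `n`-ary multiplications as functions
`(Fin n → V) → V`, the action of `GL(V)` on them, orbits, and the
(n+1)-dimensional n-ary Filippov algebras of Kaygorodov–Volkov, each described
as an alternating `n`-linear map by its values on the increasing tuples of
distinct standard basis vectors (0-indexed: `bt n j` is the tuple omitting `e j`). -/

/-- The underlying space `V = ℂ^{n+1}`. -/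
abbrev nV (n : ℕ) : Type := Fin (n + 1) → ℂ

/-- The `j`-th standard basis vector of `V` (0-indexed). -/
def sb (n : ℕ) (j : Fin (n + 1)) : nV n := Pi.single j 1

/-- The increasing `n`-tuple of standard basis vectors omitting `e j`. -/
def bt (n : ℕ) (j : Fin (n + 1)) : Fin n → nV n := fun k => sb n (j.succAbove k)

/-- The action of `GL(V)` (invertible linear maps) on `n`-ary multiplications:
`(g • μ)(x₁, …, xₙ) = g (μ (g⁻¹ x₁, …, g⁻¹ xₙ))`. -/
noncomputable def glAct (n : ℕ) (g : nV n ≃ₗ[ℂ] nV n) (μ : (Fin n → nV n) → nV n) :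
    (Fin n → nV n) → nV n :=
  fun x => g (μ fun i => g.symm (x i))

/-- The `GL(V)`-orbit of an `n`-ary multiplication. -/
def glOrbit (n : ℕ) (μ : (Fin n → nV n) → nV n) : Set ((Fin n → nV n) → nV n) :=
  {ν | ∃ g : nV n ≃ₗ[ℂ] nV n, ν = glAct n g μ}

/-- The algebra `B`: `[e₂, …, e_{n+1}] = e₁` (0-indexed: the tuple omitting `e 0`
maps to `e 0`), all other increasing basis products zero. -/
def IsB (n : ℕ) (μ : AlternatingMap ℂ (nV n) (nV n) (Fin n)) : Prop :=
  μ (bt n 0) = sb n 0 ∧ ∀ j : Fin (n + 1), j ≠ 0 → μ (bt n j) = 0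

/-- The algebra `C₁`: `[e₂, …, e_{n+1}] = e₁`, `[e₁, e₃, …, e_{n+1}] = e₂`. -/
def IsC1 (n : ℕ) (μ : AlternatingMap ℂ (nV n) (nV n) (Fin n)) : Prop :=
  μ (bt n 0) = sb n 0 ∧ μ (bt n 1) = sb n 1 ∧
    ∀ j : Fin (n + 1), j ≠ 0 → j ≠ 1 → μ (bt n j) = 0

/-- The algebra `C₂(α)`: `[e₂, …, e_{n+1}] = α e₁ + e₂`, `[e₁, e₃, …, e_{n+1}] = e₂`. -/
def IsC2 (n : ℕ) (α : ℂ) (μ : AlternatingMap ℂ (nV n) (nV n) (Fin n)) : Prop :=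
  μ (bt n 0) = α • sb n 0 + sb n 1 ∧ μ (bt n 1) = sb n 1 ∧
    ∀ j : Fin (n + 1), j ≠ 0 → j ≠ 1 → μ (bt n j) = 0

/-- The algebra `C₃`: `[e₁, e₃, …, e_{n+1}] = e₁`, `[e₂, e₃, …, e_{n+1}] = e₂`. -/
def IsC3 (n : ℕ) (μ : AlternatingMap ℂ (nV n) (nV n) (Fin n)) : Prop :=
  μ (bt n 1) = sb n 0 ∧ μ (bt n 0) = sb n 1 ∧
    ∀ j : Fin (n + 1), j ≠ 0 → j ≠ 1 → μ (bt n j) = 0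

/-- The algebra `D_r`: `[e₁, …, e_{i-1}, e_{i+1}, …, e_{n+1}] = e_i` for `1 ≤ i ≤ r`
(0-indexed: the tuple omitting `e j` maps to `e j` for `j < r` and to `0` otherwise). -/
def IsD (n r : ℕ) (μ : AlternatingMap ℂ (nV n) (nV n) (Fin n)) : Prop :=
  ∀ j : Fin (n + 1), ((j : ℕ) < r → μ (bt n j) = sb n j) ∧ (r ≤ (j : ℕ) → μ (bt n j) = 0)

/-- For every integer `n ≥ 2`, the algebra `C₃` does not degenerate to `B`. -/
noncomputable def Dm (n : ℕ) (j : Fin (n+1)) : AlternatingMap ℂ (nV n) ℂ (Fin n) :=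
  (Matrix.detRowAlternating).compLinearMap (LinearMap.funLeft ℂ ℂ j.succAbove)

/-- the linear functional given by coefficient vector `w` -/
noncomputable def phi (n : ℕ) (w : nV n) (v : nV n) : ℂ := ∑ i, w i * v i

noncomputable def phiL (n : ℕ) (w : nV n) : nV n →ₗ[ℂ] ℂ where
  toFun := phi n w
  map_add' u v := by simp [phi, mul_add, Finset.sum_add_distrib]
  map_smul' c v := by
    simp only [phi, Pi.smul_apply, smul_eq_mul, RingHom.id_apply, Finset.mul_sum]
    exact Finset.sum_congr rfl fun i _ => by ring

theorem phi_sb_right (n : ℕ) (w : nV n) (j : Fin (n+1)) : phi n w (sb n j) = w j := by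
  simp [phi, sb, Pi.single_apply]

theorem phi_zero_right (n : ℕ) (w : nV n) : phi n w 0 = 0 := by simp [phi]

/-- the separating quantity -/
noncomputable def Ef (n : ℕ) (w : nV n) (x : Fin (n+1) → nV n) (f : (Fin n → nV n) → nV n) : ℂ :=
  ∑ k : Fin (n+1), (-1:ℂ)^(k:ℕ) * phi n w (x k) * phi n w (f fun i => x (k.succAbove i))

theorem Dm_apply (n : ℕ) (j : Fin (n+1)) (y : Fin n → nV n) :
    Dm n j y = Matrix.det (Matrix.of fun l m => y l (j.succAbove m)) := rfl

theorem altsum_apply {n : ℕ} {ι' : Type} (s : Finset ι')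
    (f : ι' → AlternatingMap ℂ (nV n) ℂ (Fin n)) (x : Fin n → nV n) :
    (∑ i ∈ s, f i) x = ∑ i ∈ s, f i x := by
  induction s using Finset.cons_induction with
  | empty => simp
  | cons a s ha ih => simp [Finset.sum_cons, ih]

theorem alt_expand (n : ℕ) (α : AlternatingMap ℂ (nV n) ℂ (Fin n)) :
    α = ∑ j : Fin (n+1), α (bt n j) • Dm n j := by
  apply Module.Basis.ext_alternating (Pi.basisFun ℂ (Fin (n+1)))
  intro v hv
  have he : (fun i => (Pi.basisFun ℂ (Fin (n+1))) (v i)) = fun i => sb n (v i) := by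
    funext i; simp [sb]
  rw [he]
  -- find the missing index j
  have hnsurj : ¬ Function.Surjective v := by
    intro hs
    have := Fintype.card_le_of_surjective v hs
    simp at this
  rw [Function.Surjective] at hnsurj
  push_neg at hnsurj
  obtain ⟨j, hj⟩ := hnsurj
  have hex : ∀ m, ∃ z, j.succAbove z = v m := fun m => Fin.exists_succAbove_eq (hj m)
  choose σ hσ using hex
  have hσinj : Function.Injective σ := by
    intro a b hab
    apply hv
    rw [← hσ a, ← hσ b, hab]
  let π : Equiv.Perm (Fin n) := Equiv.ofBijective σ (Finite.injective_iff_bijective.mp hσinj)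
  have hπ : ∀ m, j.succAbove (π m) = v m := hσ
  have hlhs : (fun i => sb n (v i)) = (bt n j) ∘ π := by
    funext m; simp [bt, hπ m]
  rw [hlhs, AlternatingMap.map_perm, altsum_apply]
  have hterm : ∀ j' : Fin (n+1),
      (α (bt n j') • Dm n j') ((bt n j) ∘ π)
        = if j' = j then Equiv.Perm.sign π • α (bt n j) else 0 := by
    intro j'
    rw [AlternatingMap.smul_apply, ← hlhs]
    by_cases h : j' = j
    · subst h
      have hdet : Dm n j' (fun i => sb n (v i)) = Matrix.det (π.permMatrix ℂ) := by
        rw [Dm_apply]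
        congr 1
        ext l m
        rw [Matrix.of_apply, ← hπ l]
        by_cases hm : π l = m
        · subst hm
          simp [sb, Pi.single_apply, Equiv.Perm.permMatrix, PEquiv.toMatrix_apply, Equiv.toPEquiv_apply]
        · have hne : j'.succAbove m ≠ j'.succAbove (π l) :=
            fun hc => hm (Fin.succAbove_right_injective hc).symm
          simp [sb, Pi.single_apply, hne, Equiv.Perm.permMatrix, PEquiv.toMatrix_apply, Equiv.toPEquiv_apply, hm]
      rw [hdet, Matrix.det_permutation]
      simp [Units.smul_def, zsmul_eq_mul, mul_comm]
    · rw [if_neg h]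
      have hl0 : ∃ l, v l = j' := by
        by_contra hno
        push_neg at hno
        have hsub : Finset.univ.image v ⊆ (Finset.univ.erase j').erase j := by
          intro a ha
          simp only [Finset.mem_image] at ha
          obtain ⟨m, _, rfl⟩ := ha
          exact Finset.mem_erase.mpr ⟨hj m, Finset.mem_erase.mpr ⟨hno m, Finset.mem_univ _⟩⟩
        have hc1 : (Finset.univ.image v).card = n := by
          rw [Finset.card_image_of_injective _ hv]; simp
        have hc2 : ((Finset.univ.erase j').erase j).card = n - 1 := by
          rw [Finset.card_erase_of_mem, Finset.card_erase_of_mem] <;>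
            simp [Finset.mem_erase, h, Ne.symm h]
        have := Finset.card_le_card hsub
        rw [hc1, hc2] at this
        omega
      obtain ⟨l₀, hl₀⟩ := hl0
      have hDz : Dm n j' (fun i => sb n (v i)) = 0 := by
        rw [Dm_apply]
        apply Matrix.det_eq_zero_of_row_eq_zero l₀
        intro m
        simp [sb, hl₀, Pi.single_apply, (Fin.succAbove_ne j' m)]
      rw [hDz, smul_zero]
  rw [Finset.sum_congr rfl (fun j' _ => hterm j')]
  simp

theorem cofactor (n : ℕ) (x : Fin (n+1) → nV n) (i j : Fin (n+1)) :
    ∑ k : Fin (n+1), (-1:ℂ)^(k:ℕ) * x k i * Dm n j (fun l => x (k.succAbove l))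
      = if i = j then (-1:ℂ)^(j:ℕ) * Matrix.det (Matrix.of fun a b => x a b) else 0 := by
  set A : Matrix (Fin (n+1)) (Fin (n+1)) ℂ :=
    Matrix.of (fun a b => if b = j then x a i else x a b) with hA
  have h1 : Matrix.det A
      = ∑ k : Fin (n+1), (-1:ℂ)^((k:ℕ)+(j:ℕ)) * x k i * Dm n j (fun l => x (k.succAbove l)) := by
    rw [Matrix.det_succ_column A j]
    refine Finset.sum_congr rfl fun k _ => ?_
    have h2 : A k j = x k i := by simp [hA]
    have h3 : Matrix.det (A.submatrix k.succAbove j.succAbove)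
        = Dm n j (fun l => x (k.succAbove l)) := by
      rw [Dm_apply]
      congr 1
      ext l m
      simp [hA, Matrix.submatrix_apply, (Fin.succAbove_ne j m)]
    rw [h2, h3]
  have hsq : ((-1:ℂ)^(j:ℕ)) * ((-1:ℂ)^(j:ℕ)) = 1 := by
    rw [← pow_add]; exact Even.neg_one_pow ⟨(j:ℕ), rfl⟩
  have h4 : ∑ k : Fin (n+1), (-1:ℂ)^(k:ℕ) * x k i * Dm n j (fun l => x (k.succAbove l))
      = (-1:ℂ)^(j:ℕ) * Matrix.det A := by
    rw [h1, Finset.mul_sum]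
    refine Finset.sum_congr rfl fun k _ => ?_
    rw [pow_add]
    linear_combination (-((-1:ℂ))^(k:ℕ)) * x k i * ((Dm n j) fun l => x (k.succAbove l)) * hsq
  rw [h4]
  by_cases h : i = j
  · subst h
    rw [if_pos rfl]
    have : A = Matrix.of fun a b => x a b := by
      ext a b
      by_cases hb : b = i <;> simp [hA, hb]
    rw [this]
  · rw [if_neg h]
    have hdet : Matrix.det A = 0 := by
      rw [← Matrix.det_transpose]
      apply Matrix.det_zero_of_row_eq (show i ≠ j from h)
      funext a
      simp [hA, Matrix.transpose_apply, h]
    rw [hdet, mul_zero]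

theorem Ef_mu_zero (n : ℕ) (hn : 2 ≤ n) (μ : AlternatingMap ℂ (nV n) (nV n) (Fin n))
    (hμ : IsC3 n μ) (w : nV n) (x : Fin (n+1) → nV n) : Ef n w x ⇑μ = 0 := by
  set α : AlternatingMap ℂ (nV n) ℂ (Fin n) := (phiL n w).compAlternatingMap μ with hα
  have hmu : ∀ y : Fin n → nV n,
      phi n w (μ y) = ∑ j : Fin (n+1), α (bt n j) * Dm n j y := by
    intro y
    have h0 : phi n w (μ y) = α y := rfl
    rw [h0]
    conv_lhs => rw [alt_expand n α]
    rw [altsum_apply]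
    exact Finset.sum_congr rfl fun j _ => by rw [AlternatingMap.smul_apply, smul_eq_mul]
  have step1 : Ef n w x ⇑μ = ∑ i : Fin (n+1), ∑ j : Fin (n+1),
      (w i * α (bt n j)) *
        (∑ k : Fin (n+1), (-1:ℂ)^(k:ℕ) * x k i * Dm n j (fun l => x (k.succAbove l))) := by
    unfold Ef
    have hterm : ∀ k : Fin (n+1),
        (-1:ℂ)^(k:ℕ) * phi n w (x k) * phi n w (μ fun i => x (k.succAbove i))
          = ∑ i : Fin (n+1), ∑ j : Fin (n+1),
              (w i * α (bt n j)) * ((-1:ℂ)^(k:ℕ) * x k i * Dm n j (fun l => x (k.succAbove l))) := by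
      intro k
      rw [hmu]
      show (-1:ℂ)^(k:ℕ) * (∑ i : Fin (n+1), w i * x k i) *
          (∑ j : Fin (n+1), α (bt n j) * Dm n j (fun l => x (k.succAbove l))) = _
      rw [mul_assoc, Finset.sum_mul_sum, Finset.mul_sum]
      refine Finset.sum_congr rfl fun i _ => ?_
      rw [Finset.mul_sum]
      refine Finset.sum_congr rfl fun j _ => ?_
      ring
    rw [Finset.sum_congr rfl fun k _ => hterm k, Finset.sum_comm]
    refine Finset.sum_congr rfl fun i _ => ?_
    rw [Finset.sum_comm]
    refine Finset.sum_congr rfl fun j _ => ?_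
    rw [Finset.mul_sum]
  rw [step1]
  have step2 : ∀ i j : Fin (n+1), (w i * α (bt n j)) *
      (∑ k : Fin (n+1), (-1:ℂ)^(k:ℕ) * x k i * Dm n j (fun l => x (k.succAbove l)))
      = (w i * α (bt n j)) *
        (if i = j then (-1:ℂ)^(j:ℕ) * Matrix.det (Matrix.of fun a b => x a b) else 0) := by
    intro i j
    rw [cofactor n x i j]
  rw [Finset.sum_congr rfl fun i _ => Finset.sum_congr rfl fun j _ => step2 i j]
  have step3 : ∀ i : Fin (n+1), ∑ j : Fin (n+1), (w i * α (bt n j)) *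
      (if i = j then (-1:ℂ)^(j:ℕ) * Matrix.det (Matrix.of fun a b => x a b) else 0)
      = (-1:ℂ)^(i:ℕ) * w i * α (bt n i) * Matrix.det (Matrix.of fun a b => x a b) := by
    intro i
    rw [Finset.sum_eq_single i]
    · rw [if_pos rfl]; ring
    · intro j _ hj; rw [if_neg (Ne.symm hj), mul_zero]
    · intro h; exact absurd (Finset.mem_univ i) h
  rw [Finset.sum_congr rfl fun i _ => step3 i]
  -- now evaluate the coefficients α (bt n i)
  have h1v : ((1 : Fin (n+1)) : ℕ) = 1 := by
    rw [Fin.val_one']; exact Nat.mod_eq_of_lt (by omega)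
  have h01 : (0 : Fin (n+1)) ≠ 1 := by
    apply Fin.ne_of_val_ne
    rw [Fin.val_zero, h1v]
    omega
  have hc0 : α (bt n 0) = w 1 := by
    show phi n w (μ (bt n 0)) = w 1
    rw [hμ.2.1, phi_sb_right]
  have hc1 : α (bt n 1) = w 0 := by
    show phi n w (μ (bt n 1)) = w 0
    rw [hμ.1, phi_sb_right]
  have hcz : ∀ i : Fin (n+1), i ≠ 0 → i ≠ 1 → α (bt n i) = 0 := by
    intro i h0 h1
    show phi n w (μ (bt n i)) = 0
    rw [hμ.2.2 i h0 h1, phi_zero_right]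
  rw [← Finset.sum_subset (Finset.subset_univ ({0, 1} : Finset (Fin (n+1))))]
  · rw [Finset.sum_pair h01, hc0, hc1]
    simp only [Fin.val_zero, pow_zero, Fin.val_one']
    rw [show (1 % (n+1)) = 1 from Nat.mod_eq_of_lt (by omega), pow_one]
    ring
  · intro i _ hi
    simp only [Finset.mem_insert, Finset.mem_singleton] at hi
    push_neg at hi
    rw [hcz i hi.1 hi.2]
    ring

theorem basis_expand (n : ℕ) (v : nV n) : ∑ j : Fin (n+1), v j • sb n j = v := by
  funext a
  rw [Finset.sum_apply]
  simp [sb, Pi.single_apply]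

theorem phi_comp (n : ℕ) (w : nV n) (g : nV n ≃ₗ[ℂ] nV n) (v : nV n) :
    phi n w (g v) = phi n (fun j => phi n w (g (sb n j))) v := by
  conv_lhs => rw [← basis_expand n v]
  rw [map_sum]
  have h1 : phi n w (∑ j : Fin (n+1), g (v j • sb n j))
      = ∑ j : Fin (n+1), v j * phi n w (g (sb n j)) := by
    rw [show phi n w = ⇑(phiL n w) from rfl, map_sum]
    refine Finset.sum_congr rfl fun j _ => ?_
    rw [map_smul, map_smul, smul_eq_mul]
  rw [h1]
  unfold phi
  exact Finset.sum_congr rfl fun j _ => by ring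

theorem Ef_glAct (n : ℕ) (w : nV n) (x : Fin (n+1) → nV n) (g : nV n ≃ₗ[ℂ] nV n)
    (f : (Fin n → nV n) → nV n) :
    Ef n w x (glAct n g f)
      = Ef n (fun j => phi n w (g (sb n j))) (fun a => g.symm (x a)) f := by
  unfold Ef glAct
  refine Finset.sum_congr rfl fun k _ => ?_
  rw [← phi_comp n w g, ← phi_comp n w g, LinearEquiv.apply_symm_apply]

theorem Ef_continuous (n : ℕ) (w : nV n) (x : Fin (n+1) → nV n) :
    Continuous fun f : (Fin n → nV n) → nV n => Ef n w x f := by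
  unfold Ef
  apply continuous_finset_sum
  intro k _
  apply Continuous.mul continuous_const
  unfold phi
  apply continuous_finset_sum
  intro i _
  exact continuous_const.mul ((continuous_apply i).comp
    (continuous_apply (fun l => x (k.succAbove l))))

theorem Ef_nu_one (n : ℕ) (ν : AlternatingMap ℂ (nV n) (nV n) (Fin n)) (hν : IsB n ν) :
    Ef n (sb n 0) (sb n) ⇑ν = 1 := by
  have hphi0 : ∀ v : nV n, phi n (sb n 0) v = v 0 := by
    intro v; simp [phi, sb, Pi.single_apply]
  unfold Ef
  rw [Finset.sum_eq_single 0]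
  · have hbt : (fun i => sb n ((0 : Fin (n+1)).succAbove i)) = bt n 0 := rfl
    rw [hbt, hphi0, hphi0, hν.1]
    simp [sb, Pi.single_apply]
  · intro k _ hk
    rw [hphi0]
    have : sb n k 0 = 0 := by simp [sb, Pi.single_apply, Ne.symm hk]
    rw [this, mul_zero, zero_mul]
  · intro h; exact absurd (Finset.mem_univ _) h

theorem C3_not_degenerates_to_B (n : ℕ) (hn : 2 ≤ n)
    (μ ν : AlternatingMap ℂ (nV n) (nV n) (Fin n)) (hμ : IsC3 n μ) (hν : IsB n ν) :
    ⇑ν ∉ closure (glOrbit n ⇑μ) := by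
  intro hcl
  have horb : glOrbit n ⇑μ ⊆ {f : (Fin n → nV n) → nV n | Ef n (sb n 0) (sb n) f = 0} := by
    rintro f ⟨g, rfl⟩
    show Ef n (sb n 0) (sb n) (glAct n g ⇑μ) = 0
    rw [Ef_glAct]
    exact Ef_mu_zero n hn μ hμ _ _
  have hclosed : IsClosed {f : (Fin n → nV n) → nV n | Ef n (sb n 0) (sb n) f = 0} :=
    isClosed_eq (Ef_continuous n _ _) continuous_const
  have h0 : Ef n (sb n 0) (sb n) ⇑ν = 0 := closure_minimal horb hclosed hcl
  rw [Ef_nu_one n ν hν] at h0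
  exact one_ne_zero h0
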